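/- Let S be a finitely generated submonoid of ℕ^d and P a nonempty finite subset of ℕ^d. Then for every nonzero s ∈ S there exists p ∈ P with s + p ∈ S if and only if for every minimal generator a of S there exists p ∈ P with a + p ∈ S. -/
import Mathlib


/-- `a` is a minimal generator of `S`: a nonzero element of `S` that is not
a sum of two nonzero elements of `S`. -/
def IsMinGen {d : ℕ} (S : Set (Fin d → ℕ)) (a : Fin d → ℕ) : Prop :=
  a ∈ S ∧ a ≠ 0 ∧ ¬ ∃ x ∈ S, ∃ y ∈ S, x ≠ 0 ∧ y ≠ 0 ∧ a = x + y

private lemma exists_mingen_decomp {d : ℕ} (S : AddSubmonoid (Fin d → ℕ)) :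
    ∀ n : ℕ, ∀ s ∈ S, s ≠ 0 → (∑ i, s i) ≤ n →
      ∃ a, IsMinGen (S : Set (Fin d → ℕ)) a ∧ ∃ t ∈ S, s = a + t := by
  intro n
  induction n with
  | zero =>
    intro s hs hs0 hsum
    exfalso
    apply hs0
    funext i
    have := Finset.sum_eq_zero_iff.mp (Nat.le_zero.mp hsum) i (Finset.mem_univ i)
    simpa using this
  | succ n ih =>
    intro s hs hs0 hsum
    by_cases hmin : IsMinGen (S : Set (Fin d → ℕ)) s
    · exact ⟨s, hmin, 0, S.zero_mem, by simp⟩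
    · have : ∃ x ∈ (S : Set (Fin d → ℕ)), ∃ y ∈ (S : Set (Fin d → ℕ)),
          x ≠ 0 ∧ y ≠ 0 ∧ s = x + y := by
        by_contra h
        exact hmin ⟨hs, hs0, h⟩
      obtain ⟨x, hx, y, hy, hx0, hy0, hsxy⟩ := this
      have hypos : 0 < ∑ i, y i := by
        rcases Function.ne_iff.mp hy0 with ⟨i, hi⟩
        exact Finset.sum_pos' (fun _ _ => Nat.zero_le _)
          ⟨i, Finset.mem_univ i, Nat.pos_of_ne_zero (by simpa using hi)⟩
      have hxle : (∑ i, x i) ≤ n := by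
        have : (∑ i, x i) + (∑ i, y i) ≤ n + 1 := by
          rw [← Finset.sum_add_distrib]
          simpa [hsxy] using hsum
        omega
      obtain ⟨a, ha, t, ht, hxat⟩ := ih x hx hx0 hxle
      exact ⟨a, ha, t + y, S.add_mem ht hy, by rw [hsxy, hxat, add_assoc]⟩

theorem stmt_0 {d : ℕ} (S : AddSubmonoid (Fin d → ℕ)) (hFG : S.FG)
    (P : Set (Fin d → ℕ)) (hPfin : P.Finite) (hPne : P.Nonempty) :
    (∀ s ∈ S, s ≠ 0 → ∃ p ∈ P, s + p ∈ S) ↔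
      (∀ a, IsMinGen (S : Set (Fin d → ℕ)) a → ∃ p ∈ P, a + p ∈ S) := by
  constructor
  · intro h a ⟨haS, ha0, _⟩
    exact h a haS ha0
  · intro h s hs hs0
    obtain ⟨a, ha, t, ht, hst⟩ :=
      exists_mingen_decomp S (∑ i, s i) s hs hs0 le_rfl
    obtain ⟨p, hp, hap⟩ := h a ha
    refine ⟨p, hp, ?_⟩
    have : s + p = (a + p) + t := by rw [hst]; ring
    rw [this]
    exact S.add_mem hap ht
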